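/- Let k be a field and A a commutative k-algebra. If χ ∈ (A ⊗[k] A)ˣ is a unit satisfying the multiplicative cocycle condition ∂₂(χ) = ∂₁(χ) · ∂₃(χ) in A ⊗[k] A ⊗[k] A, then there exists a unit α ∈ Aˣ such that χ = α⁻¹ ⊗ α. (This expresses that the Amitsur cohomology set H¹(A/k, 𝔾ₘ) is trivial for every algebra A over a field k.) -/

import Mathlib

open TensorProduct

/-- `∂₁ : A ⊗[k] A → A ⊗[k] A ⊗[k] A`, `a ⊗ b ↦ 1 ⊗ a ⊗ b`. -/
noncomputable def amitsurP1 (k A : Type*) [CommRing k] [CommRing A] [Algebra k A] :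
    A ⊗[k] A →ₐ[k] A ⊗[k] (A ⊗[k] A) :=
  Algebra.TensorProduct.includeRight

/-- `∂₂ : A ⊗[k] A → A ⊗[k] A ⊗[k] A`, `a ⊗ b ↦ a ⊗ 1 ⊗ b`. -/
noncomputable def amitsurP2 (k A : Type*) [CommRing k] [CommRing A] [Algebra k A] :
    A ⊗[k] A →ₐ[k] A ⊗[k] (A ⊗[k] A) :=
  Algebra.TensorProduct.map (AlgHom.id k A) Algebra.TensorProduct.includeRight

/-- `∂₃ : A ⊗[k] A → A ⊗[k] A ⊗[k] A`, `a ⊗ b ↦ a ⊗ b ⊗ 1`. -/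
noncomputable def amitsurP3 (k A : Type*) [CommRing k] [CommRing A] [Algebra k A] :
    A ⊗[k] A →ₐ[k] A ⊗[k] (A ⊗[k] A) :=
  Algebra.TensorProduct.map (AlgHom.id k A) Algebra.TensorProduct.includeLeft

section AmitsurAux

variable (k A : Type*) [CommRing k] [CommRing A] [Algebra k A]

/-- Apply a functional to the left tensor factor. -/
noncomputable def amitsurPhi (f : Module.Dual k A) : A ⊗[k] A →ₗ[k] A :=
  TensorProduct.lift ((LinearMap.lsmul k A).comp f)

/-- Apply a functional to the leftmost factor of a triple tensor. -/
noncomputable def amitsurPsi (f : Module.Dual k A) :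
    A ⊗[k] (A ⊗[k] A) →ₗ[k] A ⊗[k] A :=
  TensorProduct.lift ((LinearMap.lsmul k (A ⊗[k] A)).comp f)

variable {k A}

@[simp] lemma amitsurPhi_tmul (f : Module.Dual k A) (a b : A) :
    amitsurPhi k A f (a ⊗ₜ[k] b) = f a • b := by
  simp [amitsurPhi]

@[simp] lemma amitsurPsi_tmul (f : Module.Dual k A) (a : A) (x : A ⊗[k] A) :
    amitsurPsi k A f (a ⊗ₜ[k] x) = f a • x := by
  simp [amitsurPsi]

lemma amitsurPsi_p2 (f : Module.Dual k A) (x : A ⊗[k] A) :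
    amitsurPsi k A f (amitsurP2 k A x) = 1 ⊗ₜ[k] amitsurPhi k A f x := by
  induction x with
  | zero => simp
  | add x y hx hy => simp [map_add, hx, hy, TensorProduct.tmul_add]
  | tmul a b => simp [amitsurP2, tmul_smul]

lemma amitsurPsi_p1_mul_p3 (f : Module.Dual k A) (x y : A ⊗[k] A) :
    amitsurPsi k A f (amitsurP1 k A x * amitsurP3 k A y)
      = x * (amitsurPhi k A f y ⊗ₜ[k] 1) := by
  induction x with
  | zero => simp
  | add x x' hx hx' => simp only [map_add, add_mul, hx, hx']
  | tmul a b =>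
    induction y with
    | zero => simp
    | add y y' hy hy' =>
      simp only [map_add, mul_add, hy, hy', TensorProduct.tmul_add, TensorProduct.add_tmul]
    | tmul a' b' =>
      simp only [amitsurP1, amitsurP3, Algebra.TensorProduct.includeRight_apply,
        Algebra.TensorProduct.map_tmul, AlgHom.id_apply,
        Algebra.TensorProduct.includeLeft_apply, Algebra.TensorProduct.tmul_mul_tmul,
        one_mul, mul_one, amitsurPsi_tmul, amitsurPhi_tmul, smul_tmul', smul_tmul]
      rw [mul_smul_comm, mul_one]

lemma amitsurPhi_oneTmul_mul (f : Module.Dual k A) (c : A) (w : A ⊗[k] A) :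
    amitsurPhi k A f ((1 ⊗ₜ[k] c) * w) = c * amitsurPhi k A f w := by
  induction w with
  | zero => simp
  | add x y hx hy => simp [mul_add, map_add, hx, hy]
  | tmul a b =>
    simp [Algebra.TensorProduct.tmul_mul_tmul, mul_smul_comm, mul_comm c b]

lemma amitsurPhi_eq_zero (kk AA : Type*) [Field kk] [CommRing AA] [Algebra kk AA]
    (w : AA ⊗[kk] AA) (h : ∀ f : Module.Dual kk AA, amitsurPhi kk AA f w = 0) :
    w = 0 := by
  classical
  let ℬ := Module.Basis.ofVectorSpace kk AA
  let e : AA ⊗[kk] AA ≃ₗ[kk] (Module.Basis.ofVectorSpaceIndex kk AA →₀ AA) :=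
    (TensorProduct.congr ℬ.repr (LinearEquiv.refl kk AA)).trans
      (TensorProduct.finsuppScalarLeft kk AA _)
  have key : ∀ (i) (v : AA ⊗[kk] AA), e v i = amitsurPhi kk AA (ℬ.coord i) v := by
    intro i v
    induction v with
    | zero => simp
    | add x y hx hy => simp [map_add, hx, hy]
    | tmul a b =>
      simp [e, TensorProduct.congr, Module.Basis.coord_apply]
  have he : e w = 0 := by
    ext i
    rw [key i w, h]
    simp
  simpa using (LinearEquiv.map_eq_zero_iff e).mp he

end AmitsurAux

/-- `H¹(A/k, 𝔾ₘ)` is trivial for every algebra `A` over a field `k`: every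
multiplicative 1-cocycle `χ ∈ (A ⊗[k] A)ˣ` is of the form `α⁻¹ ⊗ α`. -/
theorem amitsur_h1_Gm_trivial (k A : Type*) [Field k] [CommRing A] [Algebra k A]
    (χ : (A ⊗[k] A)ˣ)
    (hcoc : amitsurP2 k A χ.val = amitsurP1 k A χ.val * amitsurP3 k A χ.val) :
    ∃ α : Aˣ, χ.val = ((α⁻¹ : Aˣ) : A) ⊗ₜ[k] ((α : Aˣ) : A) := by
  classical
  rcases subsingleton_or_nontrivial A with hA | hA
  · haveI : Subsingleton (A ⊗[k] A) := by
      constructor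
      intro x y
      have hz : ∀ z : A ⊗[k] A, z = 0 := by
        intro z
        induction z with
        | zero => rfl
        | add x y hx hy => rw [hx, hy, add_zero]
        | tmul a b => rw [Subsingleton.elim a 0, TensorProduct.zero_tmul]
      rw [hz x, hz y]
    exact ⟨1, Subsingleton.elim _ _⟩
  -- a functional sending 1 to 1
  obtain ⟨g, hg⟩ := (Algebra.linearMap k A).exists_leftInverse_of_injective
    (LinearMap.ker_eq_bot.mpr (algebraMap k A).injective)
  have hg1 : g 1 = 1 := by
    have := LinearMap.congr_fun hg 1
    simpa using this
  set c : A ⊗[k] A := χ.val with hc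
  set c' : A ⊗[k] A := ((χ⁻¹ : (A ⊗[k] A)ˣ) : A ⊗[k] A) with hc'
  have hcc' : c * c' = 1 := χ.mul_inv
  have hc'c : c' * c = 1 := χ.inv_mul
  -- the inverse also satisfies the cocycle condition
  have key1 : (amitsurP1 k A c' * amitsurP3 k A c') * amitsurP2 k A c = 1 := by
    rw [hcoc]
    calc (amitsurP1 k A c' * amitsurP3 k A c') * (amitsurP1 k A c * amitsurP3 k A c)
        = (amitsurP1 k A c * amitsurP1 k A c') * (amitsurP3 k A c * amitsurP3 k A c') := by
          ring
      _ = 1 := by rw [← map_mul, ← map_mul, hcc', map_one, map_one, one_mul]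
  have hcoc' : amitsurP2 k A c' = amitsurP1 k A c' * amitsurP3 k A c' := by
    calc amitsurP2 k A c'
        = amitsurP2 k A c' * ((amitsurP1 k A c' * amitsurP3 k A c') * amitsurP2 k A c) := by
          rw [key1, mul_one]
      _ = (amitsurP2 k A (c' * c)) * (amitsurP1 k A c' * amitsurP3 k A c') := by
          rw [map_mul]; ring
      _ = amitsurP1 k A c' * amitsurP3 k A c' := by rw [hc'c, map_one, one_mul]
  -- main identities
  have hI : ∀ f : Module.Dual k A,
      (1 : A) ⊗ₜ[k] (amitsurPhi k A f c) = c * ((amitsurPhi k A f c) ⊗ₜ[k] (1 : A)) := by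
    intro f
    have h := congrArg (amitsurPsi k A f) hcoc
    rwa [amitsurPsi_p2, amitsurPsi_p1_mul_p3] at h
  have hI' : ∀ f : Module.Dual k A,
      (1 : A) ⊗ₜ[k] (amitsurPhi k A f c') = c' * ((amitsurPhi k A f c') ⊗ₜ[k] (1 : A)) := by
    intro f
    have h := congrArg (amitsurPsi k A f) hcoc'
    rwa [amitsurPsi_p2, amitsurPsi_p1_mul_p3] at h
  by_cases hex : ∃ f f' : Module.Dual k A, amitsurPhi k A f c * amitsurPhi k A f' c' ≠ 0
  · obtain ⟨f, f', hne⟩ := hex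
    set u : A := amitsurPhi k A f c with hu
    set v : A := amitsurPhi k A f' c' with hv
    have ht : (1 : A) ⊗ₜ[k] (u * v) = (u * v) ⊗ₜ[k] (1 : A) := by
      have h := congrArg₂ (fun x y : A ⊗[k] A => x * y) (hI f) (hI' f')
      rw [Algebra.TensorProduct.tmul_mul_tmul, one_mul,
        mul_mul_mul_comm, hcc', one_mul,
        Algebra.TensorProduct.tmul_mul_tmul, mul_one] at h
      exact h
    have huv : u * v = g (u * v) • 1 := by
      have h := congrArg (amitsurPhi k A g) ht
      simpa [hg1] using h
    set s : k := g (u * v) with hs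
    have hs0 : s ≠ 0 := by
      intro h0
      rw [h0, zero_smul] at huv
      exact hne huv
    have hmul : u * (s⁻¹ • v) = 1 := by
      rw [mul_smul_comm, huv, smul_smul, inv_mul_cancel₀ hs0, one_smul]
    refine ⟨⟨u, s⁻¹ • v, hmul, by rw [mul_comm] at hmul; exact hmul⟩, ?_⟩
    have h := congrArg (fun x : A ⊗[k] A => x * ((s⁻¹ • v) ⊗ₜ[k] (1 : A))) (hI f)
    rw [Algebra.TensorProduct.tmul_mul_tmul, one_mul, mul_one,
      mul_assoc, Algebra.TensorProduct.tmul_mul_tmul, mul_one, hmul,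
      ← Algebra.TensorProduct.one_def, mul_one] at h
    exact h.symm
  · push_neg at hex
    exfalso
    have hc0 : ∀ f : Module.Dual k A, amitsurPhi k A f c = 0 := by
      intro f
      set u : A := amitsurPhi k A f c with hu
      have h1 : ∀ f' : Module.Dual k A, amitsurPhi k A f' (((1 : A) ⊗ₜ[k] u) * c') = 0 := by
        intro f'
        rw [amitsurPhi_oneTmul_mul]
        exact hex f f'
      have h2 : ((1 : A) ⊗ₜ[k] u) * c' = 0 := amitsurPhi_eq_zero k A _ h1
      have h3 : (1 : A) ⊗ₜ[k] u = 0 := by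
        have := congrArg (fun x : A ⊗[k] A => x * c) h2
        simpa [mul_assoc, hc'c] using this
      have := congrArg (amitsurPhi k A g) h3
      simpa [hg1] using this
    have hczero : c = 0 := amitsurPhi_eq_zero k A c hc0
    have h1 : (1 : A ⊗[k] A) = 0 := by rw [← hcc', hczero, zero_mul]
    have h2 : (1 : A) = 0 := by
      have := congrArg (amitsurPhi k A g) h1
      rw [Algebra.TensorProduct.one_def] at this
      simp only [amitsurPhi_tmul, hg1, one_smul, map_zero] at this
      exact this
    exact one_ne_zero h2
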